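/- Let I be a finite index set, d ≥ 1, and let n > 0, k > 0 and, for all i, j ∈ I, N_i > 0 and N_{ij} > 0 be real numbers. Fix vectors z̃_j ∈ ℝ^d for j ∈ I, and for Z = (z_i)_{i∈I} ∈ (ℝ^d)^I define ℓ(Z) = −Σ_{i,j∈I} [ N_{ij}·log σ(⟨z_i, z̃_j⟩) + (k/n)·N_i·N_j·log σ(−⟨z_i, z̃_j⟩) ]. Define R̃_{ij} = log( n·N_{ij} / (k·N_i·N_j) ) and m_{ij} = N_{ij} + (k/n)·N_i·N_j. Then ℓ is differentiable in z_i and its gradient with respect to z_i satisfies ∇_{z_i} ℓ(Z) = Σ_{j∈I} m_{ij} · ( σ(⟨z_i, z̃_j⟩) − σ(R̃_{ij}) ) · z̃_j; in particular the gradient is a weighted sum of the context vectors z̃_j, weighted by the sigmoid-space error between the model prediction σ(⟨z_i, z̃_j⟩) and the target σ(R̃_{ij}). -/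

import Mathlib

open Finset

/-- The logistic sigmoid function. -/
noncomputable def sigmoid (x : ℝ) : ℝ := 1 / (1 + Real.exp (-x))

lemma one_add_exp_pos (x : ℝ) : 0 < 1 + Real.exp x := by positivity

lemma sigmoid_pos (x : ℝ) : 0 < sigmoid x := by
  unfold sigmoid; positivity

lemma sigmoid_neg_eq (x : ℝ) : sigmoid (-x) = Real.exp (-x) * sigmoid x := by
  unfold sigmoid
  rw [neg_neg]
  have h1 := (one_add_exp_pos x).ne'
  have h2 := (one_add_exp_pos (-x)).ne'
  field_simp
  rw [add_mul, one_mul, ← Real.exp_add, add_neg_cancel, Real.exp_zero]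
  ring

lemma sigmoid_neg (x : ℝ) : sigmoid (-x) = 1 - sigmoid x := by
  rw [sigmoid_neg_eq]
  unfold sigmoid
  have h2 := (one_add_exp_pos (-x)).ne'
  field_simp
  ring

lemma hasDerivAt_sigmoid (t : ℝ) :
    HasDerivAt sigmoid (sigmoid t * sigmoid (-t)) t := by
  have h1 : HasDerivAt (fun s : ℝ => 1 + Real.exp (-s)) (-Real.exp (-t)) t := by
    simpa using ((hasDerivAt_id t).neg.exp.const_add 1)
  have h2 := h1.inv (one_add_exp_pos (-t)).ne'
  have hfun : sigmoid = fun y : ℝ => (1 + Real.exp (-y))⁻¹ :=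
    funext fun y => one_div _
  have h3 : HasDerivAt sigmoid (- -Real.exp (-t) / (1 + Real.exp (-t)) ^ 2) t :=
    hfun ▸ h2
  convert h3 using 1
  rw [neg_neg, sigmoid_neg_eq]
  unfold sigmoid
  have h2' := (one_add_exp_pos (-t)).ne'
  field_simp
lemma hasDerivAt_log_sigmoid (t : ℝ) :
    HasDerivAt (fun s => Real.log (sigmoid s)) (sigmoid (-t)) t := by
  have h := (hasDerivAt_sigmoid t).log (sigmoid_pos t).ne'
  convert h using 1
  rw [mul_comm, mul_div_assoc, div_self (sigmoid_pos t).ne', mul_one]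

lemma hasDerivAt_log_sigmoid_neg (t : ℝ) :
    HasDerivAt (fun s => Real.log (sigmoid (-s))) (-sigmoid t) t := by
  have h := (hasDerivAt_log_sigmoid (-t)).comp t (hasDerivAt_id t).neg
  simp only [Function.comp, neg_neg, mul_neg_one] at h
  exact h

set_option maxHeartbeats 1000000 in
/-- The gradient of the SGNS objective with respect to the embedding `z_i` is a
weighted sum of the context vectors `z̃_j`, weighted by the sigmoid-space error
between the model prediction `σ⟨z_i, z̃_j⟩` and the target `σ(R̃_{ij})`. -/
theorem sgns_gradient
    {I : Type*} [Fintype I] [DecidableEq I] {d : ℕ} (hd : 1 ≤ d)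
    (n k : ℝ) (hn : 0 < n) (hk : 0 < k)
    (N : I → ℝ) (Nij : I → I → ℝ)
    (hN : ∀ i, 0 < N i) (hNij : ∀ i j, 0 < Nij i j)
    (zt : I → EuclideanSpace ℝ (Fin d))
    (ℓ : (I → EuclideanSpace ℝ (Fin d)) → ℝ)
    (hℓ : ∀ Z : I → EuclideanSpace ℝ (Fin d), ℓ Z =
      -∑ i, ∑ j, (Nij i j * Real.log (sigmoid (inner ℝ (Z i) (zt j) : ℝ))
        + (k / n) * N i * N j * Real.log (sigmoid (-(inner ℝ (Z i) (zt j) : ℝ)))))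
    (R : I → I → ℝ)
    (hR : ∀ i j, R i j = Real.log (n * Nij i j / (k * N i * N j)))
    (m : I → I → ℝ)
    (hm : ∀ i j, m i j = Nij i j + (k / n) * N i * N j)
    (Z : I → EuclideanSpace ℝ (Fin d)) (i : I) :
    HasGradientAt (fun z : EuclideanSpace ℝ (Fin d) => ℓ (Function.update Z i z))
      (∑ j, (m i j * (sigmoid (inner ℝ (Z i) (zt j) : ℝ) - sigmoid (R i j))) • zt j)
      (Z i) := by
  set c : I → ℝ := fun j => m i j * (sigmoid (inner ℝ (Z i) (zt j) : ℝ) - sigmoid (R i j))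
    with hc
  -- key arithmetic fact: m i j * sigmoid (R i j) = Nij i j
  have hmR : ∀ j, m i j * sigmoid (R i j) = Nij i j := by
    intro j
    have hNi := hN i; have hNj := hN j; have hNijj := hNij i j
    have ha : (0:ℝ) < n * Nij i j / (k * N i * N j) := by positivity
    rw [hR, hm]
    unfold sigmoid
    rw [Real.exp_neg, Real.exp_log ha]
    field_simp
  -- the per-coordinate scalar function and its derivative
  have hφ : ∀ j (t : ℝ), HasDerivAt
      (fun s => -(Nij i j * Real.log (sigmoid s)
        + (k / n) * N i * N j * Real.log (sigmoid (-s))))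
      (m i j * sigmoid t - Nij i j) t := by
    intro j t
    have h := (((hasDerivAt_log_sigmoid t).const_mul (Nij i j)).add
      ((hasDerivAt_log_sigmoid_neg t).const_mul ((k / n) * N i * N j))).neg
    refine h.congr_deriv ?_
    rw [sigmoid_neg, hm]
    ring
  have hcj : ∀ j, c j = m i j * sigmoid (inner ℝ (Z i) (zt j) : ℝ) - Nij i j := by
    intro j; simp only [hc]; rw [mul_sub, hmR]
  have hinner : ∀ j, HasFDerivAt
      (fun z : EuclideanSpace ℝ (Fin d) => (inner ℝ z (zt j) : ℝ))
      ((innerSL ℝ (zt j) : EuclideanSpace ℝ (Fin d) →L[ℝ] ℝ)) (Z i) := by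
    intro j
    have := (innerSL ℝ (zt j)).hasFDerivAt (x := Z i)
    apply this.congr_of_eventuallyEq
    filter_upwards with z
    exact (real_inner_comm z (zt j)).symm
  have hterm : ∀ j, HasFDerivAt
      (fun z : EuclideanSpace ℝ (Fin d) =>
        -(Nij i j * Real.log (sigmoid (inner ℝ z (zt j) : ℝ))
        + (k / n) * N i * N j * Real.log (sigmoid (-(inner ℝ z (zt j) : ℝ)))))
      (c j • (innerSL ℝ (zt j) : EuclideanSpace ℝ (Fin d) →L[ℝ] ℝ)) (Z i) := by
    intro j
    have h := (hφ j (inner ℝ (Z i) (zt j) : ℝ)).comp_hasFDerivAt (Z i) (hinner j)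
    rw [hcj j]
    exact h
  have hsum : HasFDerivAt
      (fun z : EuclideanSpace ℝ (Fin d) =>
        ∑ j, -(Nij i j * Real.log (sigmoid (inner ℝ z (zt j) : ℝ))
        + (k / n) * N i * N j * Real.log (sigmoid (-(inner ℝ z (zt j) : ℝ)))))
      (∑ j, c j • (innerSL ℝ (zt j) : EuclideanSpace ℝ (Fin d) →L[ℝ] ℝ)) (Z i) :=
    HasFDerivAt.fun_sum (fun j _ => hterm j)
  obtain ⟨C, hC⟩ : ∃ C : ℝ, C = -∑ i' ∈ Finset.univ.erase i, ∑ j,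
      (Nij i' j * Real.log (sigmoid (inner ℝ (Z i') (zt j) : ℝ))
        + (k / n) * N i' * N j * Real.log (sigmoid (-(inner ℝ (Z i') (zt j) : ℝ)))) := ⟨_, rfl⟩
  have hfun : (fun z : EuclideanSpace ℝ (Fin d) => ℓ (Function.update Z i z)) =
      (fun z : EuclideanSpace ℝ (Fin d) =>
        (∑ j, -(Nij i j * Real.log (sigmoid (inner ℝ z (zt j) : ℝ))
        + (k / n) * N i * N j * Real.log (sigmoid (-(inner ℝ z (zt j) : ℝ))))) + C) := by
    funext z
    rw [hℓ, ← Finset.add_sum_erase Finset.univ _ (Finset.mem_univ i), neg_add]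
    have he : (∑ i' ∈ Finset.univ.erase i, ∑ j,
        (Nij i' j * Real.log (sigmoid (inner ℝ (Function.update Z i z i') (zt j) : ℝ))
          + (k / n) * N i' * N j *
            Real.log (sigmoid (-(inner ℝ (Function.update Z i z i') (zt j) : ℝ)))))
        = ∑ i' ∈ Finset.univ.erase i, ∑ j,
        (Nij i' j * Real.log (sigmoid (inner ℝ (Z i') (zt j) : ℝ))
          + (k / n) * N i' * N j *
            Real.log (sigmoid (-(inner ℝ (Z i') (zt j) : ℝ)))) :=
      Finset.sum_congr rfl fun i' hi' => by
        rw [Function.update_of_ne (Finset.ne_of_mem_erase hi')]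
    rw [Function.update_self, he, ← hC, ← Finset.sum_neg_distrib]
  rw [hasGradientAt_iff_hasFDerivAt]
  have hdual : (InnerProductSpace.toDual ℝ (EuclideanSpace ℝ (Fin d))) (∑ j, c j • zt j) =
      ∑ j, c j • (innerSL ℝ (zt j) : EuclideanSpace ℝ (Fin d) →L[ℝ] ℝ) := by
    apply ContinuousLinearMap.ext
    intro v
    simp [InnerProductSpace.toDual_apply_apply, sum_inner, real_inner_smul_left]
  rw [hfun, hdual]
  exact hsum.add_const C
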